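/- Let m ≥ 2 be an integer and let c* be any element of the set { (−1)^l · (−cos(lmπ/(m−1))) : l = 0,...,2(m−1)−1 } with c* ≠ 0 (equivalently, any nonzero real of the form ±cos(kmπ/(m−1))). Then |c*| ≥ sin(π/(2(m−1))). -/

import Mathlib

open Real

theorem stmt_4 (m : ℤ) (hm : 2 ≤ m) (c : ℝ)
    (hc : ∃ k : ℤ, c = Real.cos ((k : ℝ) * m * π / ((m : ℝ) - 1)) ∨
        c = -Real.cos ((k : ℝ) * m * π / ((m : ℝ) - 1)))
    (hne : c ≠ 0) :
    Real.sin (π / (2 * ((m : ℝ) - 1))) ≤ |c| := by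
  obtain ⟨k, hk⟩ := hc
  set q : ℤ := m - 1 with hq
  have hq1 : 1 ≤ q := by omega
  have hQ : (0:ℝ) < (q:ℝ) := by exact_mod_cast hq1
  have hQne : (q:ℝ) ≠ 0 := ne_of_gt hQ
  have hQcast : ((m:ℝ) - 1) = (q:ℝ) := by push_cast [hq]; ring
  set n : ℤ := k * m with hn
  have harg : (k : ℝ) * m * π / ((m : ℝ) - 1) = (n:ℝ) * π / q := by
    rw [hQcast]; push_cast [hn]; ring
  have habs : |c| = |Real.cos ((n:ℝ) * π / q)| := by
    rcases hk with h | h <;> rw [h, harg]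
    rw [abs_neg]
  -- Step A: reduce to r = n % q
  set r : ℤ := n % q with hr
  have hr0 : 0 ≤ r := Int.emod_nonneg n (by omega)
  have hrq : r < q := Int.emod_lt_of_pos n (by omega)
  have hd : n = q * (n / q) + r := (Int.mul_ediv_add_emod n q).symm
  set d : ℤ := n / q with hdq
  have hargA : (n:ℝ) * π / q = (d:ℝ) * π + (r:ℝ) * π / q := by
    have : (n:ℝ) = (q:ℝ) * d + r := by exact_mod_cast hd
    rw [this]; field_simp
  have hstepA : |Real.cos ((n:ℝ) * π / q)| = |Real.cos ((r:ℝ) * π / q)| := by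
    rw [hargA, Real.cos_add, Real.sin_int_mul_pi, zero_mul, sub_zero, abs_mul,
      Real.abs_cos_int_mul_pi, one_mul]
  -- Step B: reduce to r' with 2*r' ≤ q
  set r' : ℤ := if 2 * r ≤ q then r else q - r with hr'
  have hr'0 : 0 ≤ r' := by rw [hr']; split <;> omega
  have hr'q : 2 * r' ≤ q := by rw [hr']; split <;> omega
  have hstepB : |Real.cos ((r:ℝ) * π / q)| = |Real.cos ((r':ℝ) * π / q)| := by
    rw [hr']; split
    · rfl
    · have : ((q - r : ℤ) : ℝ) * π / q = π - (r:ℝ) * π / q := by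
        push_cast; field_simp
      rw [this, Real.cos_pi_sub, abs_neg]
  -- Step C: 2*r' ≠ q (else c = 0)
  have hne' : 2 * r' ≠ q := by
    intro hcontra
    apply hne
    have : (r':ℝ) * π / q = π / 2 := by
      have hq2 : (q:ℝ) = 2 * (r':ℝ) := by exact_mod_cast hcontra.symm
      rw [hq2]
      have hr'pos : (0:ℤ) < r' := by omega
      have hne0 : (r':ℝ) ≠ 0 := by
        have : (0:ℝ) < (r':ℝ) := by exact_mod_cast hr'pos
        linarith
      field_simp
    have : |c| = 0 := by
      rw [habs, hstepA, hstepB, this, Real.cos_pi_div_two, abs_zero]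
    exact abs_eq_zero.mp this
  have h2r' : 2 * r' + 1 ≤ q := by omega
  -- Final inequality
  have hle : (r':ℝ) * π / q ≤ π / 2 - π / (2 * q) := by
    have h1 : (2 * (r':ℝ) + 1) ≤ (q:ℝ) := by exact_mod_cast h2r'
    have e : π / 2 - π / (2 * (q:ℝ)) = ((q:ℝ) - 1) * π / (2 * q) := by
      field_simp
    rw [e, div_le_div_iff₀ hQ (by positivity)]
    have hnn : (0:ℝ) ≤ ((q:ℝ) - 1 - 2 * r') * (π * q) :=
      mul_nonneg (by linarith) (le_of_lt (mul_pos Real.pi_pos hQ))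
    nlinarith [hnn]
  have hge0 : 0 ≤ (r':ℝ) * π / q := by
    have : (0:ℝ) ≤ (r':ℝ) := by exact_mod_cast hr'0
    positivity
  have hlepi : π / 2 - π / (2 * q) ≤ π := by
    have : 0 ≤ π / (2 * q) := by positivity
    linarith [Real.pi_pos]
  have hmono := Real.cos_le_cos_of_nonneg_of_le_pi hge0 hlepi hle
  have hsin : Real.sin (π / (2 * (q:ℝ))) = Real.cos (π / 2 - π / (2 * q)) := by
    rw [Real.cos_pi_div_two_sub]
  rw [hQcast, habs, hstepA, hstepB, hsin]
  exact le_trans hmono (le_abs_self _)
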